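/- Let K be an algebraically closed field of characteristic 2, let V be an n-dimensional K-vector space with n ≥ 1, and let u be a unipotent endomorphism of V with a single Jordan block of size n, i.e. (u − 1)^{n−1} ≠ 0 and (u − 1)^{n} = 0. Let ũ denote the induced map on the symmetric square S²(V). Then dim ker(ũ − 1) = ⌊n/2⌋ + 1; equivalently, the number of Jordan blocks of ũ on S²(V) is ⌊n/2⌋ + 1. -/

import Mathlib

open scoped TensorProduct

/-- The symmetric square `S²(V)`: the quotient of `V ⊗ V` by the span of all
`x ⊗ y - y ⊗ x`. -/
noncomputable abbrev SymSq (K V : Type*) [Field K] [AddCommGroup V] [Module K V] : Type _ :=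
  TensorProduct K V V ⧸
    Submodule.span K {z : TensorProduct K V V | ∃ x y : V, z = x ⊗ₜ[K] y - y ⊗ₜ[K] x}

/-- The product `xy` in the symmetric square, i.e. the image of `x ⊗ y`. -/
noncomputable def SymSq.mul {K V : Type*} [Field K] [AddCommGroup V] [Module K V]
    (x y : V) : SymSq K V :=
  Submodule.Quotient.mk (x ⊗ₜ[K] y)



section Basis
variable {K : Type*} [Field K] {V : Type*} [AddCommGroup V] [Module K V]
  [FiniteDimensional K V] {n : ℕ}

theorem jordan_indep (N : Module.End K V) (v : V) (hv : (N ^ (n-1)) v ≠ 0)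
    (hN : N ^ n = 0) :
    LinearIndependent K (fun i : Fin n => (N ^ (n - 1 - i.val)) v) := by
  rw [Fintype.linearIndependent_iff]
  intro g hg
  -- downward induction: show ∀ t, ∀ i, n - 1 - i.val ≤ t... do strong induction on i.val from top
  suffices H : ∀ m : ℕ, ∀ i : Fin n, n - 1 - i.val = m → g i = 0 by
    intro i; exact H _ i rfl
  intro m
  induction m using Nat.strong_induction_on with
  | _ m IH =>
    intro i him
    -- apply N ^ i.val to hg
    have h2 : (N ^ i.val) (∑ j : Fin n, g j • (N ^ (n - 1 - j.val)) v) = 0 := by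
      rw [hg, map_zero]
    rw [map_sum] at h2
    have key : ∀ j : Fin n, (N ^ i.val) (g j • (N ^ (n - 1 - j.val)) v)
        = if j = i then g i • (N ^ (n-1)) v else
          (if j.val < i.val then 0 else g j • (N ^ (n - 1 - j.val + i.val)) v) := by
      intro j
      rw [map_smul, ← Module.End.mul_apply, ← pow_add]
      split_ifs with h1 h2'
      · subst h1
        have hlt := j.isLt
        have heq : j.val + (n - 1 - j.val) = n - 1 := by omega
        rw [heq]
      · -- exponent ≥ n
        have : i.val + (n - 1 - j.val) = n + (i.val - j.val - 1) := by omega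
        rw [this, pow_add, hN]; simp
      · rw [add_comm]
    rw [Finset.sum_congr rfl (fun j _ => key j)] at h2
    rw [Finset.sum_eq_single i] at h2
    · simp only [if_pos rfl] at h2
      rcases smul_eq_zero.mp h2 with h | h
      · exact h
      · exact absurd h hv
    · intro j _ hji
      rw [if_neg hji]
      split_ifs with h
      · rfl
      · have hji' : i.val < j.val := by
          rcases lt_or_ge i.val j.val with h' | h'
          · exact h'
          · exfalso; apply hji; exact Fin.ext (by omega)
        have : g j = 0 := IH (n - 1 - j.val) (by omega) j rfl
        rw [this, zero_smul]
    · intro hni; exact absurd (Finset.mem_univ i) hni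

end Basis


section Model
variable {K : Type*} [Field K] {V : Type*} [AddCommGroup V] [Module K V] {n : ℕ}

theorem SymSq.mul_comm (x y : V) : SymSq.mul (K := K) x y = SymSq.mul y x := by
  rw [SymSq.mul, SymSq.mul, Submodule.Quotient.eq]
  exact Submodule.subset_span ⟨x, y, rfl⟩

theorem SymSq.mul_add_left (x x' y : V) :
    SymSq.mul (K := K) (x + x') y = SymSq.mul x y + SymSq.mul x' y := by
  rw [SymSq.mul, SymSq.mul, SymSq.mul, TensorProduct.add_tmul, Submodule.Quotient.mk_add]

theorem SymSq.mul_add_right (x y y' : V) :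
    SymSq.mul (K := K) x (y + y') = SymSq.mul x y + SymSq.mul x y' := by
  rw [SymSq.mul, SymSq.mul, SymSq.mul, TensorProduct.tmul_add, Submodule.Quotient.mk_add]

variable (b : Module.Basis (Fin n) K V)

/-- The relations submodule. -/
noncomputable abbrev symRel (K V : Type*) [Field K] [AddCommGroup V] [Module K V] :
    Submodule K (TensorProduct K V V) :=
  Submodule.span K {z : TensorProduct K V V | ∃ x y : V, z = x ⊗ₜ[K] y - y ⊗ₜ[K] x}

/-- The comparison map to the concrete model. -/
noncomputable def phiMap : TensorProduct K V V →ₗ[K] (Sym2 (Fin n) →₀ K) :=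
  (Finsupp.lmapDomain K K (Function.uncurry Sym2.mk : Fin n × Fin n → Sym2 (Fin n))) ∘ₗ
    (finsuppTensorFinsupp' K (Fin n) (Fin n)).toLinearMap ∘ₗ
    (TensorProduct.congr b.repr b.repr).toLinearMap

theorem phiMap_basis (i j : Fin n) :
    phiMap b (b i ⊗ₜ[K] b j) = Finsupp.single s(i, j) 1 := by
  simp only [phiMap, LinearMap.comp_apply, LinearEquiv.coe_coe, TensorProduct.congr_tmul,
    Module.Basis.repr_self, finsuppTensorFinsupp'_single_tmul_single, Finsupp.lmapDomain_apply,
    Finsupp.mapDomain_single, one_mul, Function.uncurry_apply_pair]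

theorem phiMap_symm (x y : V) : phiMap b (x ⊗ₜ[K] y) = phiMap b (y ⊗ₜ[K] x) := by
  have h : (LinearMap.compr₂ (TensorProduct.mk K V V) (phiMap b)) =
      (LinearMap.compr₂ (TensorProduct.mk K V V) (phiMap b)).flip := by
    apply b.ext; intro i; apply b.ext; intro j
    simp only [LinearMap.compr₂_apply, TensorProduct.mk_apply, LinearMap.flip_apply]
    rw [phiMap_basis, phiMap_basis, Sym2.eq_swap]
  have h2 := LinearMap.congr_fun (LinearMap.congr_fun h x) y
  simpa using h2

theorem phiMap_rel : symRel K V ≤ LinearMap.ker (phiMap b) := by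
  rw [Submodule.span_le]
  rintro z ⟨x, y, rfl⟩
  simp [LinearMap.mem_ker, map_sub, phiMap_symm b x y]

/-- The induced map on the symmetric square. -/
noncomputable def psiMap : SymSq K V →ₗ[K] (Sym2 (Fin n) →₀ K) :=
  Submodule.liftQ _ (phiMap b) (phiMap_rel b)

theorem psiMap_mul (x y : V) : psiMap b (SymSq.mul x y) = phiMap b (x ⊗ₜ[K] y) := rfl

theorem psiMap_mul_basis (i j : Fin n) :
    psiMap b (SymSq.mul (b i) (b j)) = Finsupp.single s(i, j) 1 := by
  rw [psiMap_mul, phiMap_basis]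

/-- Section of `psiMap`. -/
noncomputable def secMap : (Sym2 (Fin n) →₀ K) →ₗ[K] SymSq K V :=
  Finsupp.linearCombination K fun p : Sym2 (Fin n) =>
    Sym2.lift ⟨fun i j => SymSq.mul (b i) (b j), fun i j => SymSq.mul_comm _ _⟩ p

theorem secMap_single (i j : Fin n) :
    secMap b (Finsupp.single s(i, j) (1 : K)) = SymSq.mul (b i) (b j) := by
  rw [secMap, Finsupp.linearCombination_single, one_smul, Sym2.lift_mk]

theorem psi_sec : (psiMap b) ∘ₗ (secMap b) = LinearMap.id := by
  apply Finsupp.lhom_ext'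
  intro p
  induction p using Sym2.ind with
  | _ i j =>
    apply LinearMap.ext_ring
    simp only [LinearMap.comp_apply, Finsupp.lsingle_apply, LinearMap.id_apply]
    rw [secMap_single, psiMap_mul_basis]

theorem sec_psi : (secMap b) ∘ₗ (psiMap b) = LinearMap.id := by
  apply Submodule.linearMap_qext
  apply TensorProduct.ext
  apply b.ext; intro i; apply b.ext; intro j
  simp only [LinearMap.compr₂ₛₗ_apply, TensorProduct.mk_apply, LinearMap.comp_apply,
    Submodule.mkQ_apply, LinearMap.id_apply]
  have : Submodule.Quotient.mk (p := symRel K V) (b i ⊗ₜ[K] b j) = SymSq.mul (b i) (b j) := rfl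
  rw [this, psiMap_mul_basis, secMap_single]

/-- The model equivalence. -/
noncomputable def psiEquiv : SymSq K V ≃ₗ[K] (Sym2 (Fin n) →₀ K) :=
  LinearEquiv.ofLinear (psiMap b) (secMap b) (psi_sec b) (sec_psi b)

theorem psiEquiv_apply (x : SymSq K V) : psiEquiv b x = psiMap b x := rfl

theorem psiEquiv_symm_apply (y : Sym2 (Fin n) →₀ K) : (psiEquiv b).symm y = secMap b y := rfl

end Model

/-- binomial coefficient pattern for kernel vectors (mod-2 matrix entries). -/
def Bc (i j k : ℕ) : ℕ := if k ≤ j then Nat.choose (k-1-i) (j-k) else 0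

theorem Bc_zero_of_lt {i j k : ℕ} (h : j < k) : Bc i j k = 0 := by
  rw [Bc, if_neg (by omega)]

theorem Bc_of_le {i j k : ℕ} (h : k ≤ j) : Bc i j k = Nat.choose (k-1-i) (j-k) := by
  rw [Bc, if_pos h]

theorem Bc_zero_low {i j k : ℕ} (h1 : k ≤ i+1) (h2 : k < j) : Bc i j k = 0 := by
  rw [Bc_of_le (le_of_lt h2), show k-1-i = 0 from by omega]
  exact Nat.choose_eq_zero_of_lt (by omega)

theorem Bc_diag (i k : ℕ) : Bc i i k = if k = i then 1 else 0 := by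
  split_ifs with h
  · subst h; rw [Bc_of_le le_rfl, show k-1-k = 0 from by omega, Nat.sub_self]
    rfl
  · rcases Nat.lt_or_ge i k with h2 | h2
    · exact Bc_zero_of_lt h2
    · exact Bc_zero_low (by omega) (by omega)

theorem Bc_offdiag (i k : ℕ) : Bc i (i+1) k = if k = i+1 then 1 else 0 := by
  split_ifs with h
  · subst h; rw [Bc_of_le le_rfl, Nat.sub_self, Nat.choose_zero_right]
  · rcases Nat.lt_or_ge (i+1) k with h2 | h2
    · exact Bc_zero_of_lt h2
    · exact Bc_zero_low (by omega) (by omega)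

theorem pascalB (i j k : ℕ) (hij : i ≤ j) :
    (if i+1 < j then Bc (i+1) j k else 0) + Bc (i+1) (j+1) k = Bc i (j+1) k := by
  by_cases hk : k ≤ j
  · by_cases hki : k ≤ i+1
    · split_ifs with h
      · rw [Bc_zero_low (by omega) (by omega), Bc_zero_low (by omega) (by omega),
          Bc_zero_low (by omega) (by omega)]
      · rw [Bc_zero_low (by omega) (by omega), Bc_zero_low (by omega) (by omega)]
    · have hb : i+1 < j := by omega
      rw [if_pos hb, Bc_of_le (by omega), Bc_of_le (by omega), Bc_of_le (by omega)]
      rw [show k-1-(i+1) = k-2-i from by omega, show k-1-i = (k-2-i)+1 from by omega,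
        show j+1-k = (j-k)+1 from by omega, Nat.choose_succ_succ]
  · by_cases hk1 : k = j+1
    · subst hk1
      split_ifs with h
      · rw [Bc_zero_of_lt (by omega), Bc_of_le le_rfl, Bc_of_le le_rfl, Nat.sub_self,
          Nat.choose_zero_right, Nat.choose_zero_right]
      · rw [Bc_of_le le_rfl, Bc_of_le le_rfl, Nat.sub_self,
          Nat.choose_zero_right, Nat.choose_zero_right]
    · split_ifs with h
      · rw [Bc_zero_of_lt (by omega), Bc_zero_of_lt (by omega), Bc_zero_of_lt (by omega)]
      · rw [Bc_zero_of_lt (by omega), Bc_zero_of_lt (by omega)]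

section Comb
variable {K : Type*} [Field K] {n : ℕ}

/-- predecessor in `Fin n` (truncated). -/
def decF (i : Fin n) : Fin n := ⟨i.val - 1, lt_of_le_of_lt (Nat.sub_le _ _) i.isLt⟩

/-- the value of `ũ - 1` on the basis vector `e_i e_j` of the model. -/
noncomputable def valW (K : Type*) [Field K] (i j : Fin n) : Sym2 (Fin n) →₀ K :=
  (if 1 ≤ i.val then Finsupp.single s(decF i, j) (1:K) else 0) +
  (if 1 ≤ j.val then Finsupp.single s(i, decF j) (1:K) else 0) +
  (if 1 ≤ i.val ∧ 1 ≤ j.val then Finsupp.single s(decF i, decF j) (1:K) else 0)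

theorem valW_symm (i j : Fin n) : valW K i j = valW K j i := by
  rw [valW, valW]
  have e1 : s(decF i, j) = s(j, decF i) := Sym2.eq_swap
  have e2 : s(i, decF j) = s(decF j, i) := Sym2.eq_swap
  have e3 : s(decF i, decF j) = s(decF j, decF i) := Sym2.eq_swap
  rw [e1, e2, e3]
  simp only [and_comm]
  abel

/-- the model endomorphism `ũ - 1`. -/
noncomputable def M0 (K : Type*) [Field K] (n : ℕ) :
    (Sym2 (Fin n) →₀ K) →ₗ[K] (Sym2 (Fin n) →₀ K) :=
  Finsupp.linearCombination K (Sym2.lift ⟨valW K, valW_symm⟩)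

theorem M0_single (i j : Fin n) (c : K) :
    M0 K n (Finsupp.single s(i, j) c) = c • valW K i j := by
  rw [M0, Finsupp.linearCombination_single, Sym2.lift_mk]

/-- coordinates of an element of the model, with junk value 0 out of range. -/
noncomputable def Zc (z : Sym2 (Fin n) →₀ K) (i j : ℕ) : K :=
  if h : i < n ∧ j < n then z s(⟨i, h.1⟩, ⟨j, h.2⟩) else 0

theorem Zc_add (z w : Sym2 (Fin n) →₀ K) (i j : ℕ) :
    Zc (z + w) i j = Zc z i j + Zc w i j := by
  rw [Zc, Zc, Zc]; split_ifs with h <;> simp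

theorem Zc_zero (i j : ℕ) : Zc (0 : Sym2 (Fin n) →₀ K) i j = 0 := by
  rw [Zc]; split_ifs with h <;> simp

theorem Zc_smul (c : K) (z : Sym2 (Fin n) →₀ K) (i j : ℕ) :
    Zc (c • z) i j = c * Zc z i j := by
  rw [Zc, Zc]; split_ifs with h <;> simp

theorem Zc_symm (z : Sym2 (Fin n) →₀ K) (i j : ℕ) : Zc z i j = Zc z j i := by
  rw [Zc, Zc]
  rcases Nat.lt_or_ge i n with hi | hi <;> rcases Nat.lt_or_ge j n with hj | hj
  · rw [dif_pos ⟨hi, hj⟩, dif_pos ⟨hj, hi⟩, Sym2.eq_swap]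
  · rw [dif_neg (by omega), dif_neg (by omega)]
  · rw [dif_neg (by omega), dif_neg (by omega)]
  · rw [dif_neg (by omega), dif_neg (by omega)]

theorem Zc_single (i j : Fin n) (c : K) (p q : ℕ) :
    Zc (Finsupp.single s(i, j) c) p q
      = if (i.val = p ∧ j.val = q) ∨ (i.val = q ∧ j.val = p) then c else 0 := by
  have hi := i.isLt; have hj := j.isLt
  rw [Zc]
  rcases Classical.em (p < n ∧ q < n) with h | h
  · rw [dif_pos h, Finsupp.single_apply]
    by_cases hc : (i.val = p ∧ j.val = q) ∨ (i.val = q ∧ j.val = p)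
    · rw [if_pos hc]
      rw [if_pos]
      rcases hc with ⟨h1, h2⟩ | ⟨h1, h2⟩
      · exact Sym2.eq_iff.mpr (Or.inl ⟨Fin.ext h1, Fin.ext h2⟩)
      · exact Sym2.eq_iff.mpr (Or.inr ⟨Fin.ext h1, Fin.ext h2⟩)
    · rw [if_neg hc]
      rw [if_neg]
      intro hcon
      rcases Sym2.eq_iff.mp hcon with ⟨h1, h2⟩ | ⟨h1, h2⟩
      · exact hc (Or.inl ⟨congrArg Fin.val h1, congrArg Fin.val h2⟩)
      · exact hc (Or.inr ⟨congrArg Fin.val h1, congrArg Fin.val h2⟩)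
  · rw [dif_neg h, if_neg (by omega)]

theorem Zc_ite (P : Prop) [Decidable P] (z : Sym2 (Fin n) →₀ K) (p q : ℕ) :
    Zc (if P then z else 0) p q = if P then Zc z p q else 0 := by
  split_ifs with h
  · rfl
  · exact Zc_zero _ _


set_option maxHeartbeats 1000000 in
theorem scalarKey {K : Type*} [Field K] (htwo : (2:K) = 0) (c : K) (a b p q n : ℕ)
    (hab : a ≤ b) (hbn : b < n) (hpq : p ≤ q) (hq : q < n) :
    c * (((if 1 ≤ a then (if (a-1 = p ∧ b = q) ∨ (a-1 = q ∧ b = p) then (1:K) else 0) else 0) +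
      (if 1 ≤ b then (if (a = p ∧ b-1 = q) ∨ (a = q ∧ b-1 = p) then (1:K) else 0) else 0)) +
      (if 1 ≤ a ∧ 1 ≤ b then (if (a-1 = p ∧ b-1 = q) ∨ (a-1 = q ∧ b-1 = p) then (1:K) else 0) else 0))
    = (if p+1 < q then (if (a = p+1 ∧ b = q) ∨ (a = q ∧ b = p+1) then c else 0) else 0) +
      (if q+1 < n then (if (a = p ∧ b = q+1) ∨ (a = q+1 ∧ b = p) then c else 0)
        + (if (a = p+1 ∧ b = q+1) ∨ (a = q+1 ∧ b = p+1) then c else 0) else 0) := by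
  by_cases ha : 1 ≤ a
  · have hb : 1 ≤ b := le_trans ha hab
    simp only [show ((a-1 = p ∧ b = q) ∨ (a-1 = q ∧ b = p)) ↔ (a = p+1 ∧ b = q) from by omega,
      show ((a-1 = p ∧ b-1 = q) ∨ (a-1 = q ∧ b-1 = p)) ↔ (a = p+1 ∧ b = q+1) from by omega,
      if_pos ha, if_pos hb, if_pos (show 1 ≤ a ∧ 1 ≤ b from ⟨ha, hb⟩)]
    split_ifs <;> first | (exfalso; omega) | ring1 | linear_combination c * htwo
  · have ha0 : a = 0 := by omega
    simp only [if_neg ha, if_neg (show ¬(1 ≤ a ∧ 1 ≤ b) from by omega)]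
    by_cases hb : 1 ≤ b
    · simp only [if_pos hb]
      split_ifs <;> first | (exfalso; omega) | ring1 | linear_combination c * htwo
    · simp only [if_neg hb]
      split_ifs <;> first | (exfalso; omega) | ring1 | linear_combination c * htwo

theorem keyEq_single (htwo : (2:K) = 0) (i j : Fin n) (hij : i.val ≤ j.val) (c : K)
    (p q : ℕ) (hpq : p ≤ q) (hq : q < n) :
    Zc (M0 K n (Finsupp.single s(i, j) c)) p q =
      (if p + 1 < q then Zc (Finsupp.single s(i, j) c) (p+1) q else 0) +
      (if q + 1 < n then Zc (Finsupp.single s(i, j) c) p (q+1)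
          + Zc (Finsupp.single s(i, j) c) (p+1) (q+1) else 0) := by
  have hi := i.isLt; have hj := j.isLt
  rw [M0_single, Zc_smul]
  have hexp : Zc (valW K i j) p q =
      (if 1 ≤ i.val then Zc (Finsupp.single s(decF i, j) (1:K)) p q else 0) +
      (if 1 ≤ j.val then Zc (Finsupp.single s(i, decF j) (1:K)) p q else 0) +
      (if 1 ≤ i.val ∧ 1 ≤ j.val then Zc (Finsupp.single s(decF i, decF j) (1:K)) p q else 0)
      := by
    rw [valW, Zc_add, Zc_add, Zc_ite, Zc_ite, Zc_ite]
  rw [hexp]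
  simp only [Zc_single]
  have hd1 : (decF i).val = i.val - 1 := rfl
  have hd2 : (decF j).val = j.val - 1 := rfl
  simp only [hd1, hd2]
  exact scalarKey htwo c i.val j.val p q n hij hj hpq hq

/-- The key coordinate formula for `M0`. -/
theorem keyEq (htwo : (2:K) = 0) (z : Sym2 (Fin n) →₀ K) (p q : ℕ) (hpq : p ≤ q) (hq : q < n) :
    Zc (M0 K n z) p q =
      (if p + 1 < q then Zc z (p+1) q else 0) +
      (if q + 1 < n then Zc z p (q+1) + Zc z (p+1) (q+1) else 0) := by
  induction z using Finsupp.induction_linear with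
  | zero => rw [map_zero]; simp [Zc_zero]
  | add f g hf hg =>
    rw [map_add, Zc_add, hf, hg, Zc_add, Zc_add, Zc_add]
    split_ifs <;> ring
  | single x c =>
    induction x using Sym2.ind with
    | _ i j =>
      rcases le_total i.val j.val with hij | hij
      · exact keyEq_single htwo i j hij c p q hpq hq
      · rw [Sym2.eq_swap]
        exact keyEq_single htwo j i hij c p q hpq hq
end Comb

section Analysis
variable {K : Type*} [Field K] {n : ℕ}

theorem char2_swap (htwo : (2:K) = 0) (a b : K) (h : 0 = a + b) : a = b := by
  linear_combination h + a * htwo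

theorem keyz (htwo : (2:K) = 0) (z : Sym2 (Fin n) →₀ K) (hz : M0 K n z = 0)
    (p q : ℕ) (h1 : p ≤ q) (h2 : q < n) :
    0 = (if p + 1 < q then Zc z (p+1) q else 0) +
      (if q + 1 < n then Zc z p (q+1) + Zc z (p+1) (q+1) else 0) := by
  have h := keyEq htwo z p q h1 h2
  rwa [hz, Zc_zero] at h

set_option maxHeartbeats 1000000 in
theorem formulaF (htwo : (2:K) = 0) (z : Sym2 (Fin n) →₀ K) (hz : M0 K n z = 0) :
    ∀ i j : ℕ, i < j → j < n →
      Zc z i j = ∑ k ∈ Finset.range n, Zc z k k * (Bc i j k : K) := by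
  suffices H : ∀ t i, n - i ≤ t → ∀ j, i < j → j < n →
      Zc z i j = ∑ k ∈ Finset.range n, Zc z k k * (Bc i j k : K) by
    intro i j h1 h2; exact H n i (by omega) j h1 h2
  intro t
  induction t with
  | zero => intro i hi j hij hj; omega
  | succ t IH =>
    intro i hi
    have inner : ∀ d j, j = i + 1 + d → j < n →
        Zc z i j = ∑ k ∈ Finset.range n, Zc z k k * (Bc i j k : K) := by
      intro d
      induction d with
      | zero =>
        intro j hj hjn
        have hj' : j = i + 1 := by omega
        subst hj'
        have h := keyz htwo z hz i i le_rfl (by omega)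
        rw [if_neg (by omega), if_pos (by omega)] at h
        have hsum : ∑ k ∈ Finset.range n, Zc z k k * (Bc i (i+1) k : K)
            = Zc z (i+1) (i+1) := by
          rw [Finset.sum_eq_single (i+1)]
          · rw [Bc_offdiag, if_pos rfl, Nat.cast_one, mul_one]
          · intro b _ hne; rw [Bc_offdiag, if_neg hne, Nat.cast_zero, mul_zero]
          · intro hnm; exact absurd (Finset.mem_range.mpr (by omega)) hnm
        rw [hsum]
        have h' : 0 = Zc z (i+1) (i+1) + Zc z i (i+1) := by linear_combination h
        exact (char2_swap htwo _ _ h').symm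
      | succ d IHd =>
        intro j hj hjn
        have hq : j = (i + 1 + d) + 1 := by omega
        subst hq
        have h := keyz htwo z hz i (i+1+d) (by omega) (by omega)
        rw [if_pos (by omega : (i+1+d) + 1 < n)] at h
        have e2 : Zc z (i+1) ((i+1+d)+1)
            = ∑ k ∈ Finset.range n, Zc z k k * (Bc (i+1) ((i+1+d)+1) k : K) :=
          IH (i+1) (by omega) ((i+1+d)+1) (by omega) (by omega)
        by_cases hcase : i + 1 < i + 1 + d
        · rw [if_pos hcase] at h
          have e1 : Zc z (i+1) (i+1+d)
              = ∑ k ∈ Finset.range n, Zc z k k * (Bc (i+1) (i+1+d) k : K) :=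
            IH (i+1) (by omega) (i+1+d) hcase (by omega)
          rw [e1, e2] at h
          have hS : (∑ k ∈ Finset.range n, Zc z k k * (Bc (i+1) (i+1+d) k : K))
              + (∑ k ∈ Finset.range n, Zc z k k * (Bc (i+1) ((i+1+d)+1) k : K))
              = ∑ k ∈ Finset.range n, Zc z k k * (Bc i ((i+1+d)+1) k : K) := by
            rw [← Finset.sum_add_distrib]
            apply Finset.sum_congr rfl
            intro k _
            rw [← mul_add]
            congr 1
            have hnat := pascalB i (i+1+d) k (by omega)
            rw [if_pos hcase] at hnat
            exact_mod_cast congrArg (Nat.cast (R := K)) hnat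
          have h' : 0 = ((∑ k ∈ Finset.range n, Zc z k k * (Bc (i+1) (i+1+d) k : K))
              + (∑ k ∈ Finset.range n, Zc z k k * (Bc (i+1) ((i+1+d)+1) k : K)))
              + Zc z i ((i+1+d)+1) := by
            linear_combination h
          rw [hS] at h'
          exact (char2_swap htwo _ _ h').symm
        · rw [if_neg hcase] at h
          rw [e2] at h
          have hS : (∑ k ∈ Finset.range n, Zc z k k * (Bc (i+1) ((i+1+d)+1) k : K))
              = ∑ k ∈ Finset.range n, Zc z k k * (Bc i ((i+1+d)+1) k : K) := by
            apply Finset.sum_congr rfl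
            intro k _
            congr 1
            have hnat := pascalB i (i+1+d) k (by omega)
            rw [if_neg hcase, Nat.zero_add] at hnat
            exact_mod_cast congrArg (Nat.cast (R := K)) hnat
          have h' : 0 = (∑ k ∈ Finset.range n, Zc z k k * (Bc i ((i+1+d)+1) k : K))
              + Zc z i ((i+1+d)+1) := by
            rw [← hS]; linear_combination h
          exact (char2_swap htwo _ _ h').symm
    intro j h1 h2; exact inner (j - (i+1)) j (by omega) h2

theorem lastColZero (htwo : (2:K) = 0) (z : Sym2 (Fin n) →₀ K) (hz : M0 K n z = 0)
    (jj : ℕ) (h1 : 1 ≤ jj) (h2 : jj < n-1) : Zc z jj (n-1) = 0 := by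
  have h := keyz htwo z hz (jj-1) (n-1) (by omega) (by omega)
  rw [if_neg (by omega : ¬ (n-1) + 1 < n), if_pos (by omega : (jj-1) + 1 < n - 1),
    show jj - 1 + 1 = jj from by omega, add_zero] at h
  exact h.symm

set_option maxHeartbeats 1000000 in
theorem diagVanish (htwo : (2:K) = 0) (z : Sym2 (Fin n) →₀ K) (hz : M0 K n z = 0) :
    ∀ k, n+1 ≤ 2*k → k < n → Zc z k k = 0 := by
  suffices H : ∀ t k, n - k ≤ t → n+1 ≤ 2*k → k < n → Zc z k k = 0 by
    intro k; exact H n k (by omega)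
  intro t; induction t with
  | zero => intro k h0 h1 h2; omega
  | succ t IH =>
    intro k h0 h1 h2
    have hF := formulaF htwo z hz (2*k - n) (n-1) (by omega) (by omega)
    rw [lastColZero htwo z hz (2*k-n) (by omega) (by omega)] at hF
    have hsum : ∑ k' ∈ Finset.range n, Zc z k' k' * (Bc (2*k-n) (n-1) k' : K)
        = Zc z k k := by
      rw [Finset.sum_eq_single_of_mem k (Finset.mem_range.mpr h2)]
      · rw [show Bc (2*k-n) (n-1) k = 1 from ?_, Nat.cast_one, mul_one]
        rw [Bc_of_le (by omega), show k-1-(2*k-n) = n-1-k from by omega, Nat.choose_self]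
      · intro b hb hbk
        have hbn : b < n := Finset.mem_range.mp hb
        rcases Nat.lt_or_ge b k with hbk2 | hbk2
        · have hB : Bc (2*k-n) (n-1) b = 0 := by
            rcases le_or_gt b (2*k-n) with hb2 | hb2
            · exact Bc_zero_low (by omega) (by omega)
            · rw [Bc_of_le (by omega)]
              exact Nat.choose_eq_zero_of_lt (by omega)
          rw [hB, Nat.cast_zero, mul_zero]
        · rw [IH b (by omega) (by omega) (by omega), zero_mul]
    rw [hsum] at hF
    exact hF.symm

/-- the kernel basis vectors. -/
noncomputable def wv (K : Type*) [Field K] (n k : ℕ) : Sym2 (Fin n) →₀ K :=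
  Finsupp.equivFunOnFinite.symm fun x =>
    Sym2.lift ⟨fun a b => ((Bc (min a.val b.val) (max a.val b.val) k : ℕ) : K),
      fun a b => by dsimp only; rw [min_comm, max_comm]⟩ x

theorem Zc_wv (k i j : ℕ) (hij : i ≤ j) (hj : j < n) :
    Zc (wv K n k) i j = (Bc i j k : K) := by
  rw [Zc, dif_pos ⟨lt_of_le_of_lt hij hj, hj⟩, wv]
  rw [Finsupp.coe_equivFunOnFinite_symm, Sym2.lift_mk]
  dsimp only
  rw [show min i j = i from min_eq_left hij, show max i j = j from max_eq_right hij]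

set_option maxHeartbeats 1000000 in
theorem M0_wv (htwo : (2:K) = 0) (k : ℕ) (h2k : 2*k ≤ n) : M0 K n (wv K n k) = 0 := by
  apply Finsupp.ext
  suffices H : ∀ p q : Fin n, p.val ≤ q.val → (M0 K n (wv K n k)) s(p,q) = 0 by
    intro t
    rw [Finsupp.coe_zero, Pi.zero_apply]
    induction t using Sym2.ind with
    | _ p q =>
      rcases le_total p.val q.val with h | h
      · exact H p q h
      · rw [Sym2.eq_swap]; exact H q p h
  intro p q hpq
  have hZ : Zc (M0 K n (wv K n k)) p.val q.val = (M0 K n (wv K n k)) s(p,q) := by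
    rw [Zc, dif_pos ⟨p.isLt, q.isLt⟩]
  rw [← hZ, keyEq htwo _ p.val q.val hpq q.isLt]
  by_cases hq1 : q.val + 1 < n
  · rw [if_pos hq1, Zc_wv k p.val (q.val+1) (by omega) (by omega),
      Zc_wv k (p.val+1) (q.val+1) (by omega) (by omega)]
    by_cases hpq1 : p.val + 1 < q.val
    · rw [if_pos hpq1, Zc_wv k (p.val+1) q.val (by omega) q.isLt]
      have hnat := pascalB p.val q.val k (by omega)
      rw [if_pos hpq1] at hnat
      have hc : ((Bc (p.val+1) q.val k : ℕ) : K) + ((Bc (p.val+1) (q.val+1) k : ℕ) : K)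
          = ((Bc p.val (q.val+1) k : ℕ) : K) := by exact_mod_cast congrArg (Nat.cast (R := K)) hnat
      linear_combination hc + ((Bc p.val (q.val+1) k : ℕ) : K) * htwo
    · rw [if_neg hpq1]
      have hnat := pascalB p.val q.val k (by omega)
      rw [if_neg hpq1, Nat.zero_add] at hnat
      have hc : ((Bc (p.val+1) (q.val+1) k : ℕ) : K) = ((Bc p.val (q.val+1) k : ℕ) : K) := by
        exact_mod_cast congrArg (Nat.cast (R := K)) hnat
      linear_combination hc + ((Bc p.val (q.val+1) k : ℕ) : K) * htwo
  · rw [if_neg hq1]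
    by_cases hpq1 : p.val + 1 < q.val
    · rw [if_pos hpq1, Zc_wv k (p.val+1) q.val (by omega) q.isLt]
      have hB : Bc (p.val+1) q.val k = 0 := by
        rcases le_or_gt k (p.val+2) with h | h
        · exact Bc_zero_low (by omega) (by omega)
        · rcases le_or_gt k q.val with h2 | h2
          · rw [Bc_of_le h2]
            exact Nat.choose_eq_zero_of_lt (by omega)
          · exact Bc_zero_of_lt h2
      rw [hB, Nat.cast_zero, add_zero]
    · rw [if_neg hpq1, add_zero]

theorem Zc_finsetSum {α : Type*} (s : Finset α) (f : α → Sym2 (Fin n) →₀ K) (i j : ℕ) :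
    Zc (∑ a ∈ s, f a) i j = ∑ a ∈ s, Zc (f a) i j := by
  classical
  induction s using Finset.induction with
  | empty => simp [Zc_zero]
  | insert a s h ih => rw [Finset.sum_insert h, Finset.sum_insert h, Zc_add, ih]

set_option maxHeartbeats 1000000 in
theorem ker_eq (hn : 1 ≤ n) (htwo : (2:K) = 0) :
    LinearMap.ker (M0 K n) = Submodule.span K (Set.range fun k : Fin (n/2+1) => wv K n k.val) := by
  apply le_antisymm
  · intro z hz
    rw [LinearMap.mem_ker] at hz
    have hrepr : z = ∑ k : Fin (n/2+1), Zc z k.val k.val • wv K n k.val := by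
      apply Finsupp.ext
      suffices H : ∀ p q : Fin n, p.val ≤ q.val →
          z s(p,q) = (∑ k : Fin (n/2+1), Zc z k.val k.val • wv K n k.val) s(p,q) by
        intro t
        induction t using Sym2.ind with
        | _ p q =>
          rcases le_total p.val q.val with h | h
          · exact H p q h
          · rw [Sym2.eq_swap]; exact H q p h
      intro p q hpq
      have hz1 : z s(p,q) = Zc z p.val q.val := by rw [Zc, dif_pos ⟨p.isLt, q.isLt⟩]
      have hz2 : (∑ k : Fin (n/2+1), Zc z k.val k.val • wv K n k.val) s(p,q)
          = Zc (∑ k : Fin (n/2+1), Zc z k.val k.val • wv K n k.val) p.val q.val := by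
        rw [Zc, dif_pos ⟨p.isLt, q.isLt⟩]
      rw [hz1, hz2, Zc_finsetSum]
      have hterm : ∀ k : Fin (n/2+1),
          Zc (Zc z k.val k.val • wv K n k.val) p.val q.val
            = Zc z k.val k.val * (Bc p.val q.val k.val : K) := by
        intro k; rw [Zc_smul, Zc_wv k.val p.val q.val hpq q.isLt]
      rw [Finset.sum_congr rfl fun k _ => hterm k]
      rcases Nat.lt_or_ge p.val q.val with hlt | hge
      · rw [formulaF htwo z hz p.val q.val hlt q.isLt]
        rw [Fin.sum_univ_eq_sum_range (fun k => Zc z k k * (Bc p.val q.val k : K)) (n/2+1)]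
        symm
        apply Finset.sum_subset (Finset.range_subset_range.mpr (by omega : n/2+1 ≤ n))
        intro x hx hnx
        rw [diagVanish htwo z hz x (by simp only [Finset.mem_range] at hnx ⊢; omega)
          (Finset.mem_range.mp hx), zero_mul]
      · have hpqF : p = q := Fin.ext (le_antisymm hpq hge)
        subst hpqF
        by_cases hq2 : p.val ≤ n/2
        · rw [Finset.sum_eq_single (⟨p.val, by omega⟩ : Fin (n/2+1))]
          · rw [show ((⟨p.val, by omega⟩ : Fin (n/2+1)) : ℕ) = p.val from rfl,
              Bc_diag, if_pos rfl, Nat.cast_one, mul_one]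
          · intro b _ hbne
            rw [Bc_diag, if_neg (fun hc => hbne (Fin.ext hc)), Nat.cast_zero, mul_zero]
          · intro hnm; exact absurd (Finset.mem_univ _) hnm
        · rw [Finset.sum_eq_zero, diagVanish htwo z hz p.val (by omega) p.isLt]
          intro b _
          rw [Bc_diag, if_neg (by have := b.isLt; omega), Nat.cast_zero, mul_zero]
    rw [hrepr]
    apply Submodule.sum_mem; intro k _
    exact Submodule.smul_mem _ _ (Submodule.subset_span ⟨k, rfl⟩)
  · rw [Submodule.span_le]
    rintro _ ⟨k, rfl⟩
    have hk : 2 * k.val ≤ n := by have := k.isLt; omega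
    simp only [SetLike.mem_coe, LinearMap.mem_ker]
    exact M0_wv htwo k.val hk

set_option maxHeartbeats 1000000 in
theorem wv_indep (hn : 1 ≤ n) : LinearIndependent K (fun k : Fin (n/2+1) => wv K n k.val) := by
  rw [Fintype.linearIndependent_iff]
  intro g hg k
  have hk : k.val < n := by have := k.isLt; omega
  have h := congrArg (fun z => Zc z k.val k.val) hg
  simp only [Zc_zero] at h
  rw [Zc_finsetSum] at h
  have hterm : ∀ j : Fin (n/2+1),
      Zc (g j • wv K n j.val) k.val k.val = g j * (Bc k.val k.val j.val : K) := by
    intro j; rw [Zc_smul, Zc_wv j.val k.val k.val le_rfl hk]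
  rw [Finset.sum_congr rfl fun j _ => hterm j] at h
  rw [Finset.sum_eq_single k] at h
  · rw [Bc_diag, if_pos rfl, Nat.cast_one, mul_one] at h
    exact h
  · intro b _ hbne
    rw [Bc_diag, if_neg (fun hc => hbne (Fin.ext hc)), Nat.cast_zero, mul_zero]
  · intro hnm; exact absurd (Finset.mem_univ _) hnm

set_option maxHeartbeats 2000000 in
theorem M0_ker_rank (hn : 1 ≤ n) (htwo : (2:K) = 0) :
    Module.finrank K (LinearMap.ker (M0 K n)) = n/2 + 1 := by
  have hli := wv_indep (K := K) (n := n) hn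
  have h1 := finrank_span_eq_card hli
  rw [Fintype.card_fin] at h1
  rw [ker_eq hn htwo]
  exact h1

end Analysis

set_option maxHeartbeats 1000000 in
/-- If `u` is unipotent with a single Jordan block of size `n` on `V` over an algebraically
closed field of characteristic two, then the induced map on the symmetric square `S²(V)` has
`⌊n/2⌋ + 1` Jordan blocks, i.e. `dim ker(ũ - 1) = ⌊n/2⌋ + 1`. -/
theorem stmt1 (K : Type*) [Field K] [IsAlgClosed K] [CharP K 2]
    (V : Type*) [AddCommGroup V] [Module K V] [FiniteDimensional K V]
    (n : ℕ) (hn : 1 ≤ n) (hdim : Module.finrank K V = n)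
    (u : Module.End K V)
    (hu1 : (u - 1) ^ (n - 1) ≠ 0) (hu2 : (u - 1) ^ n = 0)
    (ut : Module.End K (SymSq K V))
    (hut : ∀ x y : V, ut (SymSq.mul x y) = SymSq.mul (u x) (u y)) :
    Module.finrank K ↥(LinearMap.ker (ut - 1)) = n / 2 + 1 := by
  have htwo : (2:K) = 0 := by
    have h := CharP.cast_eq_zero K 2
    exact_mod_cast h
  -- pick a cyclic vector
  obtain ⟨v, hv⟩ : ∃ v : V, ((u - 1) ^ (n - 1)) v ≠ 0 := by
    by_contra h
    push_neg at h
    exact hu1 (LinearMap.ext h)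
  set e : Fin n → V := fun i => ((u - 1) ^ (n - 1 - i.val)) v with he
  have li : LinearIndependent K e := jordan_indep (u - 1) v hv hu2
  haveI : Nonempty (Fin n) := ⟨⟨0, by omega⟩⟩
  let b : Module.Basis (Fin n) K V :=
    basisOfLinearIndependentOfCardEqFinrank li (by rw [Fintype.card_fin, hdim])
  have hbe : ∀ i, b i = e i := fun i =>
    congrFun (coe_basisOfLinearIndependentOfCardEqFinrank li _) i
  -- action of u on the basis
  have hsplit : ∀ i : Fin n, u (b i) = b i + (u - 1) (b i) := by
    intro i
    rw [LinearMap.sub_apply, Module.End.one_apply]; abel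
  have hub1 : ∀ i : Fin n, 1 ≤ i.val → u (b i) = b i + b (decF i) := by
    intro i hi1
    rw [hsplit i]
    congr 1
    rw [hbe, hbe, he]
    simp only
    rw [← Module.End.mul_apply, ← pow_succ']
    have hd : (decF i).val = i.val - 1 := rfl
    have hilt : i.val < n := i.isLt
    rw [show n - 1 - i.val + 1 = n - 1 - (decF i).val from by omega]
  have hub0 : ∀ i : Fin n, ¬ (1 ≤ i.val) → u (b i) = b i := by
    intro i hi0
    rw [hsplit i]
    have : (u - 1) (b i) = 0 := by
      rw [hbe, he]
      simp only
      rw [← Module.End.mul_apply, ← pow_succ']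
      have hilt : i.val < n := i.isLt
      rw [show n - 1 - i.val + 1 = n from by omega, hu2, LinearMap.zero_apply]
    rw [this, add_zero]
  -- the model equivalence
  let ψ : SymSq K V ≃ₗ[K] (Sym2 (Fin n) →₀ K) := psiEquiv b
  have hψ : ∀ x y : V, ψ (SymSq.mul x y) = psiMap b (SymSq.mul x y) := fun _ _ => rfl
  -- conjugation identity
  have hconj : ψ.toLinearMap ∘ₗ (ut - 1) ∘ₗ ψ.symm.toLinearMap = M0 K n := by
    apply Finsupp.lhom_ext'
    intro p
    induction p using Sym2.ind with
    | _ i j =>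
      apply LinearMap.ext_ring
      simp only [LinearMap.comp_apply, Finsupp.lsingle_apply, LinearEquiv.coe_coe]
      rw [M0_single, one_smul]
      have hsymm : ψ.symm (Finsupp.single s(i, j) (1:K)) = SymSq.mul (b i) (b j) := by
        rw [show ψ.symm (Finsupp.single s(i, j) (1:K))
            = secMap b (Finsupp.single s(i, j) (1:K)) from rfl, secMap_single]
      rw [hsymm, LinearMap.sub_apply, Module.End.one_apply, hut, valW]
      by_cases hi1 : 1 ≤ i.val <;> by_cases hj1 : 1 ≤ j.val
      · rw [if_pos hi1, if_pos hj1, if_pos (show 1 ≤ i.val ∧ 1 ≤ j.val from ⟨hi1, hj1⟩)]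
        rw [hub1 i hi1, hub1 j hj1, SymSq.mul_add_left, SymSq.mul_add_right,
          SymSq.mul_add_right, map_sub, map_add, map_add, map_add,
          hψ, hψ, hψ, hψ, psiMap_mul_basis, psiMap_mul_basis, psiMap_mul_basis,
          psiMap_mul_basis]
        abel
      · rw [if_pos hi1, if_neg hj1, if_neg (show ¬(1 ≤ i.val ∧ 1 ≤ j.val) from fun hc => hj1 hc.2)]
        rw [hub1 i hi1, hub0 j hj1, SymSq.mul_add_left, map_sub, map_add,
          hψ, hψ, psiMap_mul_basis, psiMap_mul_basis]
        abel
      · rw [if_neg hi1, if_pos hj1, if_neg (show ¬(1 ≤ i.val ∧ 1 ≤ j.val) from fun hc => hi1 hc.1)]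
        rw [hub0 i hi1, hub1 j hj1, SymSq.mul_add_right, map_sub, map_add,
          hψ, hψ, psiMap_mul_basis, psiMap_mul_basis]
        abel
      · rw [if_neg hi1, if_neg hj1, if_neg (show ¬(1 ≤ i.val ∧ 1 ≤ j.val) from fun hc => hi1 hc.1)]
        rw [hub0 i hi1, hub0 j hj1, map_sub, hψ, psiMap_mul_basis]
        abel
  -- kernel transport
  have hker : LinearMap.ker (ψ.toLinearMap ∘ₗ (ut - 1) ∘ₗ ψ.symm.toLinearMap)
      = Submodule.map (ψ : SymSq K V →ₗ[K] (Sym2 (Fin n) →₀ K)) (LinearMap.ker (ut - 1)) := by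
    ext x
    simp only [LinearMap.mem_ker, LinearMap.comp_apply, LinearEquiv.coe_coe, Submodule.mem_map]
    constructor
    · intro hx
      refine ⟨ψ.symm x, ?_, by simp⟩
      exact (LinearEquiv.map_eq_zero_iff ψ).mp hx
    · rintro ⟨y, hy, rfl⟩
      rw [LinearEquiv.symm_apply_apply, hy, map_zero]
  have hfr : Module.finrank K ↥(LinearMap.ker (ut - 1))
      = Module.finrank K ↥(Submodule.map (ψ : SymSq K V →ₗ[K] (Sym2 (Fin n) →₀ K)) (LinearMap.ker (ut - 1))) :=
    LinearEquiv.finrank_eq (ψ.submoduleMap (LinearMap.ker (ut - 1)))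
  rw [hfr, ← hker, hconj]
  exact M0_ker_rank hn htwo
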